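/- Let g be a product of vectors of q-value 1 in Cl(V,q), so g is invertible. If W ⊆ V is a subspace with basis w₁,…,w_m and g w_i g⁻¹ = ±w'_i with w'_i ∈ V, then the left ideal Cl·(w₁⋯w_m)·g⁻¹ equals the left ideal Cl·(w'₁⋯w'_m). -/

import Mathlib

open CliffordAlgebra QuadraticMap

section Aux

variable {k V : Type*} [Field k] [AddCommGroup V] [Module k V] (Q : QuadraticForm k V)

lemma aux_prod_rev (l : List V) (hl : ∀ u ∈ l, Q u = 1) :
    (l.map (ι Q)).prod * (l.reverse.map (ι Q)).prod = 1 := by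
  induction l with
  | nil => simp
  | cons a t ih =>
    have ht := ih (fun u hu => hl u (List.mem_cons_of_mem _ hu))
    have ha : ι Q a * ι Q a = 1 := by
      rw [ι_sq_scalar, hl a List.mem_cons_self, map_one]
    simp only [List.map_cons, List.prod_cons, List.reverse_cons, List.map_append,
      List.prod_append, List.map_cons, List.prod_cons, List.map_nil, List.prod_nil, mul_one]
    calc ι Q a * (t.map (ι Q)).prod * ((t.reverse.map (ι Q)).prod * ι Q a)
        = ι Q a * ((t.map (ι Q)).prod * (t.reverse.map (ι Q)).prod) * ι Q a := by
          simp only [mul_assoc]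
      _ = 1 := by rw [ht, mul_one, ha]

lemma aux_conj_prod {A : Type*} [Ring A] (g h : A) (hgh : g * h = 1) (hhg : h * g = 1) :
    ∀ L : List A, g * L.prod * h = (L.map (fun x => g * x * h)).prod := by
  intro L
  induction L with
  | nil => simpa using hgh
  | cons a t ih =>
    simp only [List.prod_cons, List.map_cons]
    rw [← ih]
    calc g * (a * t.prod) * h = g * a * (h * g) * t.prod * h := by
          rw [hhg]; simp only [mul_assoc, one_mul]
      _ = g * a * h * (g * t.prod * h) := by simp only [mul_assoc]

lemma aux_smul_prod {A : Type*} [Ring A] [Algebra k A] :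
    ∀ (n : ℕ) (c : Fin n → k) (f : Fin n → A),
      (List.ofFn fun i => c i • f i).prod = (∏ i, c i) • (List.ofFn f).prod := by
  intro n
  induction n with
  | zero => intro c f; simp
  | succ n ih =>
    intro c f
    rw [List.ofFn_succ, List.ofFn_succ, List.prod_cons, List.prod_cons,
      ih (fun i => c i.succ) (fun i => f i.succ), Fin.prod_univ_succ,
      smul_mul_smul_comm, mul_smul]

lemma aux_span_unit_mul {A : Type*} [Ring A] (u v x : A) (hvu : v * u = 1) :
    Ideal.span {u * x} = Ideal.span {x} := by
  apply le_antisymm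
  · rw [Ideal.span_le, Set.singleton_subset_iff, SetLike.mem_coe]
    exact Submodule.mem_span_singleton.mpr ⟨u, rfl⟩
  · rw [Ideal.span_le, Set.singleton_subset_iff, SetLike.mem_coe]
    refine Submodule.mem_span_singleton.mpr ⟨v, ?_⟩
    show v * (u * x) = x
    rw [← mul_assoc, hvu, one_mul]

end Aux

/-- let `g` be a product of vectors of `q`-value 1 (with inverse `h`, the
product in reverse order).  If conjugation by `g` sends each basis vector `wᵢ` of `W` to
`±w'ᵢ` with `w'ᵢ ∈ V`, then the left ideals `Cl·(w₁⋯w_m)·g⁻¹` and `Cl·(w'₁⋯w'_m)` agree.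
(`Ideal.span` over a noncommutative ring is the left ideal generated.) -/
theorem stmt6 {k V : Type*} [Field k] [AddCommGroup V] [Module k V]
    (Q : QuadraticForm k V) (h2 : (2 : k) ≠ 0)
    (l : List V) (hl : ∀ u ∈ l, Q u = 1)
    (m : ℕ) (W : Submodule k V) (b : Module.Basis (Fin m) k W)
    (w' : Fin m → V) (ε : Fin m → k) (hε : ∀ i, ε i = 1 ∨ ε i = -1)
    (g h : CliffordAlgebra Q)
    (hg : g = (l.map (ι Q)).prod) (hh : h = (l.reverse.map (ι Q)).prod)
    (hconj : ∀ i, g * ι Q (b i : V) * h = ε i • ι Q (w' i)) :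
    (g * h = 1 ∧ h * g = 1) ∧
      Ideal.span {((List.ofFn fun i => ι Q (b i : V)).prod) * h} =
        Ideal.span {(List.ofFn fun i => ι Q (w' i)).prod} := by
  have hgh : g * h = 1 := by rw [hg, hh]; exact aux_prod_rev Q l hl
  have hhg : h * g = 1 := by
    rw [hg, hh]
    have := aux_prod_rev Q l.reverse (fun u hu => hl u (List.mem_reverse.mp hu))
    rwa [List.reverse_reverse] at this
  refine ⟨⟨hgh, hhg⟩, ?_⟩
  set P := (List.ofFn fun i => ι Q (b i : V)).prod with hP
  set P' := (List.ofFn fun i => ι Q (w' i)).prod with hP'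
  set c : k := ∏ i, ε i with hc
  have hcc : c * c = 1 := by
    rw [hc, ← Finset.prod_mul_distrib]
    apply Finset.prod_eq_one
    intro i _
    rcases hε i with h1 | h1 <;> rw [h1] <;> ring
  have hkey : g * P * h = c • P' := by
    rw [hP, aux_conj_prod g h hgh hhg, List.map_ofFn]
    have : ((fun x => g * x * h) ∘ fun i => ι Q (b i : V)) = fun i => ε i • ι Q (w' i) := by
      funext i; exact hconj i
    rw [this, aux_smul_prod]
  have hPh : P * h = (c • h) * P' := by
    have : P * h = h * (g * P * h) := by
      rw [← mul_assoc, ← mul_assoc, hhg, one_mul]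
    rw [this, hkey, mul_smul_comm, smul_mul_assoc]
  rw [hPh]
  exact aux_span_unit_mul (c • h) (c • g) P' (by
    rw [smul_mul_smul_comm, hgh, hcc, one_smul])
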